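/- Let (A_A, A_B, A_C) be a three-composed graded (CAR) system generating A_Z, and let (Ã_A, Ã_B, Ã_C) be the Jordan–Wigner tensor-product triple defined by Ã_A := A_A, Ã_B := the algebra generated by A_B^+ and v_A A_B^−, Ã_C := the algebra generated by A_C^+ and v_AB A_C^−, so that A_Z = Ã_A ⊗ Ã_B ⊗ Ã_C, with Ã_AB = A_AB and Ã_BC := the algebra generated by A_BC^+ and v_A A_BC^−. Then for every even state ψ on A_Z: S(ψ) − S(ψ|_{A_AB}) − S(ψ|_{A_BC}) + S(ψ|_{A_B}) = 0 if and only if S(ψ) − S(ψ|_{Ã_AB}) − S(ψ|_{Ã_BC}) + S(ψ|_{Ã_B}) = 0. -/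

import Mathlib

open scoped ComplexOrder

/-- The full matrix algebra `M_N(ℂ)`, our model of a finite-dimensional factor. -/
abbrev Mat (N : ℕ) := Matrix (Fin N) (Fin N) ℂ

variable {N : ℕ}

/-- The tracial state `τ` on `Mat N`. -/
noncomputable def tau (x : Mat N) : ℂ := x.trace / N

/-- Matrix logarithm via the continuous functional calculus. -/
noncomputable def mlog (x : Mat N) : Mat N := cfc Real.log x

/-- Matrix square root via the continuous functional calculus. -/
noncomputable def msqrt (x : Mat N) : Mat N := cfc Real.sqrt x

/-- Matrix inverse square root via the continuous functional calculus. -/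
noncomputable def misqrt (x : Mat N) : Mat N := cfc (fun t : ℝ => (Real.sqrt t)⁻¹) x

/-- The entropy `Ŝ(ψ) = -ψ(log ρ_ψ) = -τ(ρ log ρ)` of the state with τ-density `ρ`. -/
noncomputable def Shat (ρ : Mat N) : ℝ := -(tau (ρ * mlog ρ)).re

/-- The von Neumann entropy `S(ψ|_B) = -Tr_B(D log D) = Ŝ(ψ|_B) + log k` of the
restriction of a state to a subfactor `B ≅ M_k`, expressed through the τ-density `ρ`
of the restriction and the matrix size `k` of the subfactor. -/
noncomputable def Sres (ρ : Mat N) (k : ℕ) : ℝ := Shat ρ + Real.log k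

/-- `ρ` is the density with respect to the tracial state `τ` of a state of `Mat N`. -/
def IsTauDensity (ρ : Mat N) : Prop := ρ.PosSemidef ∧ tau ρ = 1

/-- `E` is the τ-preserving conditional expectation onto the unital *-subalgebra `B`:
it maps into `B`, fixes `B` pointwise, and `Tr(b x) = Tr(b (E x))` for all `b ∈ B`.
These properties determine `E` uniquely. -/
def IsCondExp (B : StarSubalgebra ℂ (Mat N)) (E : Mat N →ₗ[ℂ] Mat N) : Prop :=
  (∀ x, E x ∈ B) ∧ (∀ b ∈ B, E b = b) ∧
    (∀ x : Mat N, ∀ b ∈ B, (b * x).trace = (b * E x).trace)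

/-- `B` is a subfactor: its relative center is trivial (so `B` is a full matrix algebra). -/
def IsFactorSub (B : StarSubalgebra ℂ (Mat N)) : Prop :=
  ∀ x ∈ B, (∀ y ∈ B, x * y = y * x) → ∃ c : ℂ, x = c • (1 : Mat N)

/-- The commuting square condition: `B = AB ⊓ BC` and `E_AB ∘ E_BC = E_BC ∘ E_AB = E_B`. -/
def CommSquare (AB BC B : StarSubalgebra ℂ (Mat N))
    (EAB EBC EB : Mat N →ₗ[ℂ] Mat N) : Prop :=
  IsCondExp AB EAB ∧ IsCondExp BC EBC ∧ IsCondExp B EB ∧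
    B = AB ⊓ BC ∧ (∀ x, EAB (EBC x) = EB x) ∧ (∀ x, EBC (EAB x) = EB x)

open Classical in
/-- Relative entropy `H(ρ₁, ρ₂) = τ(ρ₁ (log ρ₁ - log ρ₂))` of two τ-densities, equal to `+∞`
unless the support of `ρ₁` is dominated by the support of `ρ₂` (for positive semidefinite
matrices the support condition is the inclusion of kernels `ker ρ₂ ⊆ ker ρ₁`). -/
noncomputable def relEnt (ρ₁ ρ₂ : Mat N) : EReal :=
  if ∀ v : Fin N → ℂ, ρ₂.mulVec v = 0 → ρ₁.mulVec v = 0 then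
    (((tau (ρ₁ * (mlog ρ₁ - mlog ρ₂))).re : ℝ) : EReal)
  else ⊤

/-- Complete positivity of a linear map on `Mat N`. -/
def IsCP (E : Mat N →ₗ[ℂ] Mat N) : Prop :=
  ∀ (k : ℕ) (x a : Fin k → Mat N),
    (∑ i, ∑ j, star (a i) * E (star (x i) * x j) * a j).PosSemidef

/-- `p` is a minimal projection of the subalgebra `B`. -/
def IsMinProj (B : StarSubalgebra ℂ (Mat N)) (p : Mat N) : Prop :=
  p ∈ B ∧ p.IsHermitian ∧ p * p = p ∧ p ≠ 0 ∧
    ∀ q ∈ B, q.IsHermitian → q * q = q → q * p = q → q = 0 ∨ q = p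

/-- The subfactor `B` of `Mat N` has matrix size `k` (i.e. `B ≅ M_k`) in the sense that its
minimal projections have ambient matrix trace `N / k`; this encodes the assumption that the
ambient matrix trace restricts on `B` to `N/k` times the canonical matrix trace of `B`. -/
def HasMatSize (B : StarSubalgebra ℂ (Mat N)) (k : ℕ) : Prop :=
  ∀ p, IsMinProj B p → Matrix.trace p = ((N : ℂ) / k)

/-- `Θ` is a grading: an involutive *-automorphism. -/
def IsGrading (Θ : Mat N ≃⋆ₐ[ℂ] Mat N) : Prop := ∀ x, Θ (Θ x) = x

/-- The subalgebra `A` is invariant under the grading. -/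
def ThetaInvariant (Θ : Mat N ≃⋆ₐ[ℂ] Mat N) (A : StarSubalgebra ℂ (Mat N)) : Prop :=
  ∀ x ∈ A, Θ x ∈ A

/-- Graded commutation relations between (the subalgebras of) two disjoint regions:
even elements of one commute with all elements of the other, odd elements anticommute. -/
def GradedComm (Θ : Mat N ≃⋆ₐ[ℂ] Mat N) (A C : StarSubalgebra ℂ (Mat N)) : Prop :=
  ∀ x ∈ A, ∀ y ∈ C,
    ((Θ x = x ∨ Θ y = y) → x * y = y * x) ∧
      (Θ x = -x → Θ y = -y → x * y + y * x = 0)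

/-- `ω` is a state (positive normalized linear functional). -/
def IsState (ω : Mat N →ₗ[ℂ] ℂ) : Prop :=
  ω 1 = 1 ∧ ∀ x : Mat N, 0 ≤ ω (star x * x)

/-- Markov property of the state `ω` with respect to a triplet with first algebra `AA` and
pair algebra `AB`: there is a quasi-conditional expectation (a completely positive map into
`AB` which is a module map over `AA`) fixing `AA` pointwise and preserving `ω`. -/
def IsMarkovState (AA AB : StarSubalgebra ℂ (Mat N)) (ω : Mat N →ₗ[ℂ] ℂ) : Prop :=
  ∃ E : Mat N →ₗ[ℂ] Mat N, IsCP E ∧ (∀ x, E x ∈ AB) ∧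
    (∀ c ∈ AA, ∀ x, E (c * x) = c * E x) ∧ (∀ c ∈ AA, E c = c) ∧
    ∀ x, ω (E x) = ω x

/-- Markov property, formulated for the state with τ-density `ρ`. -/
def IsMarkovDensity (AA AB : StarSubalgebra ℂ (Mat N)) (ρ : Mat N) : Prop :=
  ∃ E : Mat N →ₗ[ℂ] Mat N, IsCP E ∧ (∀ x, E x ∈ AB) ∧
    (∀ c ∈ AA, ∀ x, E (c * x) = c * E x) ∧ (∀ c ∈ AA, E c = c) ∧
    ∀ x, tau (ρ * E x) = tau (ρ * x)

/-- The restriction of `ω` to the subalgebra generated by `AA` and `AC` is separable: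
a convex combination of product states for the pair `(AA, AC)`. -/
def SeparableOn (AA AC : StarSubalgebra ℂ (Mat N)) (ω : Mat N →ₗ[ℂ] ℂ) : Prop :=
  ∃ (n : ℕ) (lam : Fin n → ℝ) (ωi : Fin n → (Mat N →ₗ[ℂ] ℂ)),
    (∀ i, 0 ≤ lam i) ∧ (∑ i, lam i = 1) ∧ (∀ i, IsState (ωi i)) ∧
    (∀ i, ∀ x ∈ AA, ∀ y ∈ AC, ωi i (x * y) = ωi i x * ωi i y) ∧
    ∀ z ∈ (AA ⊔ AC : StarSubalgebra ℂ (Mat N)), ω z = ∑ i, (lam i : ℂ) * ωi i z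

/-- The conditional expectation `E` is sufficient for the pair of states with τ-densities
`ρ₁, ρ₂`: some completely positive trace-preserving (recovery) map `T` recovers the densities
from their compressions `E ρ₁`, `E ρ₂` (recall that the τ-density of `ψ ∘ E` is `E ρ_ψ`). -/
def IsSufficient (E : Mat N →ₗ[ℂ] Mat N) (ρ₁ ρ₂ : Mat N) : Prop :=
  ∃ T : Mat N →ₗ[ℂ] Mat N, IsCP T ∧ (∀ x, (T x).trace = x.trace) ∧
    T (E ρ₁) = ρ₁ ∧ T (E ρ₂) = ρ₂

/-- The Jordan–Wigner transform of a region algebra: the subalgebra generated by the even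
part of `B` together with `v` times the odd part of `B`. -/
noncomputable def jwAlg {N : ℕ} (Θ : Mat N ≃⋆ₐ[ℂ] Mat N) (v : Mat N)
    (B : StarSubalgebra ℂ (Mat N)) : StarSubalgebra ℂ (Mat N) :=
  StarAlgebra.adjoin ℂ
    ({x : Mat N | x ∈ B ∧ Θ x = x} ∪ (fun y => v * y) '' {y : Mat N | y ∈ B ∧ Θ y = -y})

section AuxJW



lemma neg_eq_self_complex {a : ℂ} (h : -a = a) : a = 0 := by
  have h2 : (2 : ℂ) * a = 0 := by linear_combination -h
  simpa using (mul_eq_zero.mp h2).resolve_left two_ne_zero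

lemma theta_one {N : ℕ} (Θ : Mat N ≃⋆ₐ[ℂ] Mat N) (hΘ : IsGrading Θ) : Θ 1 = 1 := by
  have h : ∀ x : Mat N, Θ 1 * x = x := by
    intro x
    conv_lhs => rw [← hΘ x]
    rw [← map_mul, one_mul, hΘ]
  calc Θ 1 = Θ 1 * 1 := (mul_one _).symm
    _ = 1 := h 1

lemma theta_algebraMap {N : ℕ} (Θ : Mat N ≃⋆ₐ[ℂ] Mat N) (hΘ : IsGrading Θ) (r : ℂ) :
    Θ (algebraMap ℂ (Mat N) r) = algebraMap ℂ (Mat N) r := by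
  rw [Algebra.algebraMap_eq_smul_one, map_smul, theta_one Θ hΘ]

lemma trace_theta {N : ℕ} (i0 : Fin N) (Θ : Mat N ≃⋆ₐ[ℂ] Mat N) (hΘ : IsGrading Θ)
    (x : Mat N) : (Θ x).trace = x.trace := by
  have hone : Θ 1 = 1 := theta_one Θ hΘ
  have hcyc : ∀ a b : Mat N, (Θ (a * b)).trace = (Θ (b * a)).trace := by
    intro a b; rw [map_mul, map_mul, Matrix.trace_mul_comm]
  set t : ℂ := (Θ (Matrix.single i0 i0 (1:ℂ))).trace with ht
  have hdiag : ∀ i : Fin N, (Θ (Matrix.single i i (1:ℂ))).trace = t := by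
    intro i
    have h1 : Matrix.single i i (1:ℂ) =
        Matrix.single i i0 1 * Matrix.single i0 i 1 := by
      rw [Matrix.single_mul_single_same, one_mul]
    have h2 : Matrix.single i0 i 1 * Matrix.single i i0 1 =
        Matrix.single i0 i0 (1:ℂ) := by
      rw [Matrix.single_mul_single_same, one_mul]
    rw [h1, hcyc, h2]
  have hoff : ∀ i j : Fin N, i ≠ j → (Θ (Matrix.single i j (1:ℂ))).trace = 0 := by
    intro i j hij
    have h1 : Matrix.single i j (1:ℂ) =
        Matrix.single i i 1 * Matrix.single i j 1 := by
      rw [Matrix.single_mul_single_same, one_mul]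
    have h2 : Matrix.single i j (1:ℂ) * Matrix.single i i 1 = 0 :=
      by simp [Matrix.single_mul_single_of_ne, Ne.symm hij]
    rw [h1, hcyc, h2, map_zero, Matrix.trace_zero]
  have hsmul : ∀ (i j : Fin N) (r : ℂ), Matrix.single i j r =
      r • Matrix.single i j (1:ℂ) := by
    intro i j r
    rw [Matrix.smul_single, smul_eq_mul, mul_one]
  have hgen : ∀ y : Mat N, (Θ y).trace = y.trace * t := by
    intro y
    conv_lhs => rw [Matrix.matrix_eq_sum_single y]
    rw [map_sum, Matrix.trace_sum]
    have hinner : ∀ i : Fin N, (Θ (∑ j, Matrix.single i j (y i j))).trace = y i i * t := by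
      intro i
      rw [map_sum, Matrix.trace_sum]
      rw [Finset.sum_eq_single i]
      · rw [hsmul, map_smul, Matrix.trace_smul, hdiag, smul_eq_mul]
      · intro j _ hj
        rw [hsmul, map_smul, Matrix.trace_smul, hoff i j (Ne.symm hj), smul_zero]
      · intro hmem; exact absurd (Finset.mem_univ i) hmem
    rw [Finset.sum_congr rfl (fun i _ => hinner i), ← Finset.sum_mul]
    congr 1
  have hN0 : ((Fintype.card (Fin N)) : ℂ) ≠ 0 :=
    Nat.cast_ne_zero.mpr (by simp only [Fintype.card_fin]; exact i0.pos.ne')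
  have ht1 : t = 1 := by
    have h := hgen 1
    rw [hone, Matrix.trace_one] at h
    have h2 : ((Fintype.card (Fin N)) : ℂ) * 1 = ((Fintype.card (Fin N)) : ℂ) * t := by
      rw [mul_one]; exact h
    exact (mul_left_cancel₀ hN0 h2).symm
  rw [hgen x, ht1, mul_one]

lemma eq_zero_of_trace_star_mul_self {N : ℕ} {d : Mat N} (h : (star d * d).trace = 0) :
    d = 0 := by
  have key : (star d * d).trace = ((∑ j, ∑ k, Complex.normSq (d k j) : ℝ) : ℂ) := by
    push_cast
    simp only [Matrix.trace, Matrix.diag, Matrix.mul_apply, Matrix.star_apply]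
    refine Finset.sum_congr rfl fun j _ => Finset.sum_congr rfl fun k _ => ?_
    rw [Complex.normSq_eq_conj_mul_self]
    rfl
  have hr : ∑ j, ∑ k, Complex.normSq (d k j) = 0 := by
    exact_mod_cast key.symm.trans h
  ext i j
  have h1 := (Finset.sum_eq_zero_iff_of_nonneg
    (fun j _ => Finset.sum_nonneg fun k _ => Complex.normSq_nonneg _)).mp hr j (Finset.mem_univ j)
  have h2 := (Finset.sum_eq_zero_iff_of_nonneg
    (fun k _ => Complex.normSq_nonneg _)).mp h1 i (Finset.mem_univ i)
  simpa using Complex.normSq_eq_zero.mp h2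

lemma condexp_density_unique {N : ℕ} {S : StarSubalgebra ℂ (Mat N)} {d : Mat N} (hd : d ∈ S)
    (h : ∀ b ∈ S, (b * d).trace = 0) : d = 0 :=
  eq_zero_of_trace_star_mul_self (h (star d) (star_mem hd))

/-- The elements commuting with `v` and `star v`, as a star subalgebra. -/
def commAlg {N : ℕ} (v : Mat N) : StarSubalgebra ℂ (Mat N) where
  carrier := {y | v * y = y * v ∧ star v * y = y * star v}
  mul_mem' := by
    rintro a b ⟨ha1, ha2⟩ ⟨hb1, hb2⟩
    constructor
    · rw [← mul_assoc, ha1, mul_assoc, hb1, mul_assoc]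
    · rw [← mul_assoc, ha2, mul_assoc, hb2, mul_assoc]
  one_mem' := by constructor <;> rw [one_mul, mul_one]
  add_mem' := by
    rintro a b ⟨ha1, ha2⟩ ⟨hb1, hb2⟩
    constructor <;> simp only [mul_add, add_mul, ha1, ha2, hb1, hb2]
  zero_mem' := by constructor <;> simp
  algebraMap_mem' := by
    intro r
    constructor <;> simp [Algebra.algebraMap_eq_smul_one, mul_smul_comm, smul_mul_assoc]
  star_mem' := by
    rintro a ⟨h1, h2⟩
    constructor
    · have h3 := congrArg star h2
      rw [star_mul, star_mul, star_star] at h3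
      exact h3.symm
    · have h3 := congrArg star h1
      rw [star_mul, star_mul] at h3
      exact h3.symm

/-- The preimage of a star subalgebra under the grading, as a star subalgebra. -/
def thetaComap {N : ℕ} (Θ : Mat N ≃⋆ₐ[ℂ] Mat N) (hΘ : IsGrading Θ)
    (S : StarSubalgebra ℂ (Mat N)) : StarSubalgebra ℂ (Mat N) where
  carrier := {y | Θ y ∈ S}
  mul_mem' := fun ha hb => by
    simp only [Set.mem_setOf_eq, map_mul] at *
    exact mul_mem ha hb
  one_mem' := by
    simp only [Set.mem_setOf_eq, theta_one Θ hΘ]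
    exact one_mem S
  add_mem' := fun ha hb => by
    simp only [Set.mem_setOf_eq, map_add] at *
    exact add_mem ha hb
  zero_mem' := by
    simp only [Set.mem_setOf_eq, map_zero]
    exact zero_mem S
  algebraMap_mem' := fun r => by
    simp only [Set.mem_setOf_eq, theta_algebraMap Θ hΘ r]
    exact algebraMap_mem S r
  star_mem' := fun ha => by
    simp only [Set.mem_setOf_eq, map_star] at *
    exact star_mem ha

lemma jw_density_eq {N : ℕ} (i0 : Fin N) (Θ : Mat N ≃⋆ₐ[ℂ] Mat N) (hΘ : IsGrading Θ)
    (S : StarSubalgebra ℂ (Mat N)) (hSinv : ThetaInvariant Θ S)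
    (vA : Mat N) (hvAe : Θ vA = vA)
    (hcomm : ∀ y ∈ S, vA * y = y * vA) (hcomm' : ∀ y ∈ S, star vA * y = y * star vA)
    (c : ℂ) (hc : vA * vA = c • 1) (hsv : star vA = c⁻¹ • vA)
    (E F : Mat N →ₗ[ℂ] Mat N) (hE : IsCondExp S E) (hF : IsCondExp (jwAlg Θ vA S) F)
    (ρ : Mat N) (heven : ∀ x, tau (ρ * Θ x) = tau (ρ * x)) :
    F ρ = E ρ := by
  obtain ⟨hEmem, hEfix, hEtr⟩ := hE
  obtain ⟨hFmem, hFfix, hFtr⟩ := hF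
  have hN0 : ((N : ℕ) : ℂ) ≠ 0 := Nat.cast_ne_zero.mpr i0.pos.ne'
  have htr : ∀ x : Mat N, (Θ x).trace = x.trace := trace_theta i0 Θ hΘ
  have hevtr : ∀ x : Mat N, (ρ * Θ x).trace = (ρ * x).trace := by
    intro x
    have h := heven x
    simp only [tau] at h
    field_simp [hN0] at h
    exact h
  have hodd0 : ∀ x : Mat N, Θ x = -x → (x * ρ).trace = 0 := by
    intro x hx
    have h := hevtr x
    rw [hx, mul_neg, Matrix.trace_neg] at h
    rw [Matrix.trace_mul_comm]
    exact neg_eq_self_complex h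
  have htrodd : ∀ x : Mat N, Θ x = -x → x.trace = 0 := by
    intro x hx
    refine neg_eq_self_complex ?_
    rw [← Matrix.trace_neg, ← hx]
    exact htr x
  set D := E ρ with hDdef
  have hDS : D ∈ S := hEmem ρ
  have hDeven : Θ D = D := by
    have hmem : Θ D - D ∈ S := sub_mem (hSinv D hDS) hDS
    have hzero : ∀ b ∈ S, (b * (Θ D - D)).trace = 0 := by
      intro b hb
      have h1 : (b * Θ D).trace = (Θ b * D).trace := by
        have he : b * Θ D = Θ (Θ b * D) := by rw [map_mul, hΘ]
        rw [he, htr]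
      have h2 : (Θ b * D).trace = (Θ b * ρ).trace := (hEtr ρ (Θ b) (hSinv b hb)).symm
      have h3 : (Θ b * ρ).trace = (b * ρ).trace := by
        rw [Matrix.trace_mul_comm, hevtr, Matrix.trace_mul_comm]
      have h4 : (b * ρ).trace = (b * D).trace := hEtr ρ b hb
      rw [mul_sub, Matrix.trace_sub, h1, h2, h3, h4, sub_self]
    exact sub_eq_zero.mp (condexp_density_unique hmem hzero)
  have hW : ∀ z ∈ jwAlg Θ vA S,
      ∃ z₁ z₂, z₁ ∈ S ∧ Θ z₁ = z₁ ∧ z₂ ∈ S ∧ Θ z₂ = -z₂ ∧ z = z₁ + vA * z₂ := by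
    intro z hz
    induction hz using StarAlgebra.adjoin_induction with
    | mem x hx =>
      rcases hx with ⟨hxS, hxe⟩ | ⟨y, ⟨hyS, hyo⟩, rfl⟩
      · exact ⟨x, 0, hxS, hxe, zero_mem S, by rw [map_zero, neg_zero], by simp⟩
      · exact ⟨0, y, zero_mem S, by rw [map_zero], hyS, hyo, by simp⟩
    | algebraMap r =>
      exact ⟨algebraMap ℂ (Mat N) r, 0, algebraMap_mem S r, theta_algebraMap Θ hΘ r,
        zero_mem S, by rw [map_zero, neg_zero], by simp⟩
    | add x y hx hy ihx ihy =>
      obtain ⟨z₁, z₂, h1, h2, h3, h4, rfl⟩ := ihx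
      obtain ⟨w₁, w₂, g1, g2, g3, g4, rfl⟩ := ihy
      exact ⟨z₁ + w₁, z₂ + w₂, add_mem h1 g1, by rw [map_add, h2, g2],
        add_mem h3 g3, by rw [map_add, h4, g4, neg_add], by rw [mul_add]; abel⟩
    | mul x y hx hy ihx ihy =>
      obtain ⟨z₁, z₂, h1, h2, h3, h4, rfl⟩ := ihx
      obtain ⟨w₁, w₂, g1, g2, g3, g4, rfl⟩ := ihy
      have e1 : z₁ * (vA * w₂) = vA * (z₁ * w₂) := by
        rw [← mul_assoc, ← hcomm z₁ h1, mul_assoc]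
      have e2 : (vA * z₂) * (vA * w₂) = c • (z₂ * w₂) := by
        have h' : z₂ * (vA * w₂) = vA * (z₂ * w₂) := by
          rw [← mul_assoc, ← hcomm z₂ h3, mul_assoc]
        rw [mul_assoc, h', ← mul_assoc, hc, smul_mul_assoc, one_mul]
      refine ⟨z₁ * w₁ + c • (z₂ * w₂), z₁ * w₂ + z₂ * w₁,
        add_mem (mul_mem h1 g1) (SMulMemClass.smul_mem c (mul_mem h3 g3)),
        ?_, add_mem (mul_mem h1 g3) (mul_mem h3 g1), ?_, ?_⟩
      · rw [map_add, map_smul, map_mul, map_mul, h2, g2, h4, g4, neg_mul_neg]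
      · rw [map_add, map_mul, map_mul, h2, g2, h4, g4, mul_neg, neg_mul, neg_add]
      · rw [add_mul, mul_add, mul_add, e1, e2, mul_assoc vA z₂ w₁, mul_add]
        abel
    | star x hx ihx =>
      obtain ⟨z₁, z₂, h1, h2, h3, h4, rfl⟩ := ihx
      refine ⟨star z₁, c⁻¹ • star z₂, star_mem h1, by rw [map_star, h2],
        SMulMemClass.smul_mem _ (star_mem h3), ?_, ?_⟩
      · rw [map_smul, map_star, h4, star_neg, smul_neg]
      · rw [star_add, star_mul, hsv, mul_smul_comm, mul_smul_comm,
          hcomm (star z₂) (star_mem h3)]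
  have hDjw : D ∈ jwAlg Θ vA S :=
    StarAlgebra.subset_adjoin ℂ _ (Or.inl ⟨hDS, hDeven⟩)
  have hzero : ∀ z ∈ jwAlg Θ vA S, (z * (F ρ - D)).trace = 0 := by
    intro z hz
    obtain ⟨z₁, z₂, h1, h2, h3, h4, rfl⟩ := hW z hz
    have hoddz : Θ (vA * z₂) = -(vA * z₂) := by rw [map_mul, hvAe, h4, mul_neg]
    have t1 : ((z₁ + vA * z₂) * ρ).trace = (z₁ * D).trace := by
      rw [add_mul, Matrix.trace_add, hEtr ρ z₁ h1, hodd0 _ hoddz, add_zero]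
    have t2 : ((z₁ + vA * z₂) * D).trace = (z₁ * D).trace := by
      have hodd : Θ ((vA * z₂) * D) = -((vA * z₂) * D) := by
        rw [map_mul, hoddz, hDeven, neg_mul]
      rw [add_mul, Matrix.trace_add, htrodd _ hodd, add_zero]
    have t3 := hFtr ρ (z₁ + vA * z₂) hz
    rw [mul_sub, Matrix.trace_sub, ← t3, t1, t2, sub_self]
  exact sub_eq_zero.mp
    (condexp_density_unique (sub_mem (hFmem ρ) hDjw) hzero)

end AuxJW

/-- for a three-composed graded (CAR) system `(S_A, S_B, S_C)` with
implementing even unitaries `v_A, v_B` and the Jordan–Wigner transformed subalgebras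
`Ã_B = jwAlg Θ v_A S_B`, `Ã_BC = jwAlg Θ v_A (S_B ⊔ S_C)` (and `Ã_AB = A_AB`), an even
state `ψ` (τ-density `ρ`) satisfies the strong additivity of von Neumann entropy for the
CAR triple iff it satisfies it for the Jordan–Wigner tensor-product triple. -/
theorem stmt14 {N kA kB kC : ℕ} (hkA : 0 < kA) (hkB : 0 < kB) (hkC : 0 < kC)
    (hN : N = kA * kB * kC)
    (Θ : Mat N ≃⋆ₐ[ℂ] Mat N) (hΘ : IsGrading Θ)
    (SA SB SC : StarSubalgebra ℂ (Mat N))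
    (hAinv : ThetaInvariant Θ SA) (hBinv : ThetaInvariant Θ SB) (hCinv : ThetaInvariant Θ SC)
    (hfA : IsFactorSub SA) (hfB : IsFactorSub SB) (hfC : IsFactorSub SC)
    (hABc : GradedComm Θ SA SB) (hACc : GradedComm Θ SA SC) (hBCc : GradedComm Θ SB SC)
    (hgen : SA ⊔ SB ⊔ SC = ⊤)
    (vA vB : Mat N) (hvA : vA ∈ SA) (hvB : vB ∈ SB)
    (hvAe : Θ vA = vA) (hvBe : Θ vB = vB)
    (hvAu : star vA * vA = 1 ∧ vA * star vA = 1)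
    (hvBu : star vB * vB = 1 ∧ vB * star vB = 1)
    (hvAim : ∀ x ∈ SA, star vA * x * vA = Θ x)
    (hvBim : ∀ x ∈ SB, star vB * x * vB = Θ x)
    (EAB EBC EB FBC FB : Mat N →ₗ[ℂ] Mat N)
    (hEAB : IsCondExp (SA ⊔ SB) EAB) (hEBC : IsCondExp (SB ⊔ SC) EBC)
    (hEB : IsCondExp SB EB)
    (hFBC : IsCondExp (jwAlg Θ vA (SB ⊔ SC)) FBC) (hFB : IsCondExp (jwAlg Θ vA SB) FB)
    (hszAB : HasMatSize (SA ⊔ SB) (kA * kB)) (hszBC : HasMatSize (SB ⊔ SC) (kB * kC))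
    (hszB : HasMatSize SB kB)
    (hszBCjw : HasMatSize (jwAlg Θ vA (SB ⊔ SC)) (kB * kC))
    (hszBjw : HasMatSize (jwAlg Θ vA SB) kB)
    (ρ : Mat N) (hρ : IsTauDensity ρ)
    (heven : ∀ x, tau (ρ * Θ x) = tau (ρ * x)) :
    Sres ρ N - Sres (EAB ρ) (kA * kB) - Sres (EBC ρ) (kB * kC) + Sres (EB ρ) kB = 0 ↔
      Sres ρ N - Sres (EAB ρ) (kA * kB) - Sres (FBC ρ) (kB * kC) + Sres (FB ρ) kB = 0 := by
  
  have hNpos : 0 < N := hN ▸ Nat.mul_pos (Nat.mul_pos hkA hkB) hkC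
  have i0 : Fin N := ⟨0, hNpos⟩
  have hxc : ∀ x ∈ SA, x * vA = vA * Θ x := by
    intro x hx
    have h := congrArg (fun y => vA * y) (hvAim x hx)
    simp only [← mul_assoc] at h
    rw [hvAu.2, one_mul] at h
    exact h
  have hvsq_comm : ∀ x ∈ SA, (vA * vA) * x = x * (vA * vA) := by
    intro x hx
    have h1 : x * vA = vA * Θ x := hxc x hx
    have h2 : Θ x * vA = vA * x := by rw [hxc (Θ x) (hAinv x hx), hΘ]
    calc (vA * vA) * x = vA * (vA * x) := by rw [mul_assoc]
      _ = vA * (Θ x * vA) := by rw [← h2]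
      _ = (vA * Θ x) * vA := by rw [mul_assoc]
      _ = (x * vA) * vA := by rw [← h1]
      _ = x * (vA * vA) := by rw [mul_assoc]
  obtain ⟨c, hc⟩ := hfA (vA * vA) (mul_mem hvA hvA) hvsq_comm
  have hone_ne : (1 : Mat N) ≠ 0 := by
    intro h
    have h2 := congrFun (congrFun h i0) i0
    simp [Matrix.one_apply_eq] at h2
  have hcne : c ≠ 0 := by
    rintro rfl
    rw [zero_smul] at hc
    refine hone_ne ?_
    calc (1 : Mat N) = (star vA * vA) * (vA * star vA) := by rw [hvAu.1, hvAu.2, one_mul]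
      _ = star vA * ((vA * vA) * star vA) := by simp only [mul_assoc]
      _ = 0 := by rw [hc, zero_mul, mul_zero]
  have hsv : star vA = c⁻¹ • vA := by
    have h1 : star vA * (vA * vA) = vA := by rw [← mul_assoc, hvAu.1, one_mul]
    rw [hc, mul_smul_comm, mul_one] at h1
    have h2 : c⁻¹ • (c • star vA) = c⁻¹ • vA := congrArg (c⁻¹ • ·) h1
    rwa [smul_smul, inv_mul_cancel₀ hcne, one_smul] at h2
  have hsvA_even : Θ (star vA) = star vA := by rw [map_star, hvAe]
  have hsvA_mem : star vA ∈ SA := star_mem hvA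
  have hKB : SB ≤ commAlg vA := fun y hy =>
    ⟨(hABc vA hvA y hy).1 (Or.inl hvAe), (hABc (star vA) hsvA_mem y hy).1 (Or.inl hsvA_even)⟩
  have hKC : SC ≤ commAlg vA := fun y hy =>
    ⟨(hACc vA hvA y hy).1 (Or.inl hvAe), (hACc (star vA) hsvA_mem y hy).1 (Or.inl hsvA_even)⟩
  have hKBC : SB ⊔ SC ≤ commAlg vA := sup_le hKB hKC
  have hBCinv : ThetaInvariant Θ (SB ⊔ SC) := by
    have h1 : SB ⊔ SC ≤ thetaComap Θ hΘ (SB ⊔ SC) := by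
      refine sup_le (fun x hx => ?_) (fun x hx => ?_)
      · exact (le_sup_left : SB ≤ SB ⊔ SC) (hBinv x hx)
      · exact (le_sup_right : SC ≤ SB ⊔ SC) (hCinv x hx)
    exact fun x hx => h1 hx
  have hFBCeq : FBC ρ = EBC ρ :=
    jw_density_eq i0 Θ hΘ (SB ⊔ SC) hBCinv vA hvAe
      (fun y hy => (hKBC hy).1) (fun y hy => (hKBC hy).2) c hc hsv
      EBC FBC hEBC hFBC ρ heven
  have hFBeq : FB ρ = EB ρ :=
    jw_density_eq i0 Θ hΘ SB hBinv vA hvAe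
      (fun y hy => (hKB hy).1) (fun y hy => (hKB hy).2) c hc hsv
      EB FB hEB hFB ρ heven
  rw [hFBCeq, hFBeq]
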